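/- For every r ∈ F_n, every extreme point of the convex set Φ(F(r)) is a vertex of the permutohedron: every extreme point of Φ(F(r)) is of the form (λ_{σ(1)}, λ_{σ(2)}, …, λ_{σ(n)}) for some permutation σ ∈ S_n. -/

import Mathlib

open MeasureTheory

/-- Off-diagonal positions `(i,j)` with `1 ≤ i < j ≤ n` (1-indexed, encoded in `Fin (n+1)`). -/
abbrev GZpos (n : ℕ) := {p : Fin (n + 1) × Fin (n + 1) // 0 < (p.1 : ℕ) ∧ (p.1 : ℕ) < (p.2 : ℕ)}

/-- The entry `x_{i,j}` of the extended Gelfand–Zetlin array, with the convention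
`x_{i,i} = λ_i`. -/
def entry (n : ℕ) (lam : ℕ → ℝ) (x : GZpos n → ℝ) (i j : ℕ) : ℝ :=
  if h : 0 < i ∧ i < j ∧ j ≤ n then
    x ⟨(⟨i, by omega⟩, ⟨j, by omega⟩), ⟨h.1, h.2.1⟩⟩
  else lam i

/-- The Gelfand–Zetlin polytope `GZ(λ)` in `ℝ^{n(n-1)/2}`. -/
def GZ (n : ℕ) (lam : ℕ → ℝ) : Set (GZpos n → ℝ) :=
  {x | ∀ i j : ℕ, 0 < i → i ≤ j → j + 1 ≤ n →
    entry n lam x i (j + 1) ≤ entry n lam x i j ∧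
    entry n lam x (i + 1) (j + 1) ≤ entry n lam x i (j + 1)}

/-- The index set `F_n = {r = (r_1,…,r_{n-1}) : 1 ≤ r_j ≤ n-j}`, encoded as functions
`ℕ → ℕ` vanishing outside `{1,…,n-1}`. -/
def calF (n : ℕ) : Set (ℕ → ℕ) :=
  {r | (∀ j, 1 ≤ j → j ≤ n - 1 → 1 ≤ r j ∧ r j ≤ n - j) ∧
       ∀ j, j = 0 ∨ n - 1 < j → r j = 0}

/-- The face `F(r)` of `GZ(λ)`, defined by the equalities `x_{i,j+i} = x_{i,j+i-1}` for
`1 ≤ i < r_j` and `x_{i,j+i} = x_{i+1,j+i}` for `r_j < i ≤ n-j`, for each `1 ≤ j ≤ n-1`. -/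
def Fface (n : ℕ) (lam : ℕ → ℝ) (r : ℕ → ℕ) : Set (GZpos n → ℝ) :=
  {x ∈ GZ n lam | ∀ j, 1 ≤ j → j ≤ n - 1 →
    (∀ i, 1 ≤ i → i < r j → entry n lam x i (j + i) = entry n lam x i (j + i - 1)) ∧
    (∀ i, r j < i → i ≤ n - j → entry n lam x i (j + i) = entry n lam x (i + 1) (j + i))}

/-- `y_k = ∑_{i=1}^{n-k} x_{i,i+k}`. -/
def yco (n : ℕ) (lam : ℕ → ℝ) (x : GZpos n → ℝ) (k : ℕ) : ℝ :=
  ∑ i ∈ Finset.Icc 1 (n - k), entry n lam x i (i + k)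

/-- The map `Φ((x_{i,j})) = (y_0 - y_1, y_1 - y_2, …, y_{n-2} - y_{n-1}, y_{n-1})`. -/
def Phi (n : ℕ) (lam : ℕ → ℝ) (x : GZpos n → ℝ) : Fin n → ℝ :=
  fun m => if (m : ℕ) = n - 1 then yco n lam x (n - 1)
           else yco n lam x (m : ℕ) - yco n lam x ((m : ℕ) + 1)

/-- The permutohedron `Perm(λ) ⊆ ℝ^n`: the convex hull of the points
`(λ_{σ(1)}, …, λ_{σ(n)})` for `σ ∈ S_n`. -/
def PermP (n : ℕ) (lam : ℕ → ℝ) : Set (Fin n → ℝ) :=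
  convexHull ℝ {v | ∃ σ : Equiv.Perm (Fin n), v = fun i => lam ((σ i : ℕ) + 1)}


set_option linter.unusedSectionVars false
set_option linter.unusedVariables false

section A
variable {n : ℕ} {lam : ℕ → ℝ}

lemma entry_eq_x (x : GZpos n → ℝ) (p : GZpos n) :
    entry n lam x (p.1.1 : ℕ) (p.1.2 : ℕ) = x p := by
  have h : 0 < (p.1.1 : ℕ) ∧ (p.1.1 : ℕ) < (p.1.2 : ℕ) ∧ (p.1.2 : ℕ) ≤ n := by
    refine ⟨p.2.1, p.2.2, ?_⟩
    exact Nat.lt_succ_iff.mp p.1.2.isLt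
  rw [entry, dif_pos h]

lemma entry_invalid (x : GZpos n → ℝ) {i j : ℕ} (h : ¬ (0 < i ∧ i < j ∧ j ≤ n)) :
    entry n lam x i j = lam i := by rw [entry, dif_neg h]

/-- monotonicity along a diagonal -/
lemma diag_mono_succ {x : GZpos n → ℝ} (hx : x ∈ GZ n lam) (k i : ℕ) (hi : 0 < i)
    (h : i + 1 + k ≤ n) :
    entry n lam x (i + 1) (i + 1 + k) ≤ entry n lam x i (i + k) := by
  have h2 := hx i (i + k) hi (by omega) (by omega)
  have e1 : i + 1 + k = i + k + 1 := by omega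
  rw [e1]
  exact le_trans h2.2 h2.1

lemma diag_mono {x : GZpos n → ℝ} (hx : x ∈ GZ n lam) (k : ℕ) {i1 i2 : ℕ} (h1 : 0 < i1)
    (hle : i1 ≤ i2) (h2 : i2 + k ≤ n) :
    entry n lam x i2 (i2 + k) ≤ entry n lam x i1 (i1 + k) := by
  induction i2, hle using Nat.le_induction with
  | base => exact le_refl _
  | succ m hm ih =>
      exact le_trans (diag_mono_succ hx k m (by omega) h2) (ih (by omega))

noncomputable def Wfun (n : ℕ) (lam : ℕ → ℝ) (x : GZpos n → ℝ) (j : ℕ) (v0 : ℝ) (i jj : ℕ) : ℝ :=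
  if j ≤ jj - i ∧ entry n lam x i jj = v0 then 1 else 0

noncomputable def xshift (n : ℕ) (lam : ℕ → ℝ) (x : GZpos n → ℝ) (j : ℕ) (v0 : ℝ) (s : ℝ) :
    GZpos n → ℝ :=
  fun p => x p + s * Wfun n lam x j v0 (p.1.1 : ℕ) (p.1.2 : ℕ)

section B
variable {n : ℕ} {lam : ℕ → ℝ} {x : GZpos n → ℝ} {j : ℕ} {v0 : ℝ} {s : ℝ}

lemma Wfun_cases (i jj : ℕ) :
    Wfun n lam x j v0 i jj = 0 ∨
      (Wfun n lam x j v0 i jj = 1 ∧ entry n lam x i jj = v0) := by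
  unfold Wfun
  by_cases h : j ≤ jj - i ∧ entry n lam x i jj = v0
  · exact Or.inr ⟨if_pos h, h.2⟩
  · exact Or.inl (if_neg h)

lemma entry_xshift (hj : 1 ≤ j) {i jj : ℕ} (hi : 0 < i) (hij : i ≤ jj) (hjn : jj ≤ n) :
    entry n lam (xshift n lam x j v0 s) i jj
      = entry n lam x i jj + s * Wfun n lam x j v0 i jj := by
  by_cases h : i < jj
  · have hcond : 0 < i ∧ i < jj ∧ jj ≤ n := ⟨hi, h, hjn⟩
    rw [entry, dif_pos hcond, entry, dif_pos hcond]
    rfl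
  · have hij' : i = jj := le_antisymm hij (not_lt.mp h)
    have hcond : ¬ (0 < i ∧ i < jj ∧ jj ≤ n) := by omega
    rw [entry_invalid _ hcond, entry_invalid _ hcond]
    have : Wfun n lam x j v0 i jj = 0 := by
      unfold Wfun
      rw [if_neg]
      intro hc
      omega
    rw [this]
    ring

variable (hNo : ∀ i, 1 ≤ i → i + (j - 1) ≤ n → entry n lam x i (i + (j - 1)) ≠ v0)
  (hj1 : 1 ≤ j)

include hNo hj1 in
lemma W_eq_of_entry_eq {i1 jj1 i2 jj2 : ℕ} (h01 : 0 < i1) (h11 : i1 ≤ jj1) (hn1 : jj1 ≤ n)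
    (h02 : 0 < i2) (h12 : i2 ≤ jj2) (hn2 : jj2 ≤ n) (hd : jj1 - i1 = (jj2 - i2) + 1)
    (heq : entry n lam x i1 jj1 = entry n lam x i2 jj2) :
    Wfun n lam x j v0 i1 jj1 = Wfun n lam x j v0 i2 jj2 := by
  unfold Wfun
  by_cases c1 : j ≤ jj1 - i1 ∧ entry n lam x i1 jj1 = v0
  · rw [if_pos c1, if_pos]
    constructor
    · -- j ≤ jj2 - i2, else jj2 - i2 = j - 1 and entry2 = v0 contradicting hNo
      by_contra hlt
      have hd2 : jj2 - i2 = j - 1 := by omega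
      have hjj2 : jj2 = i2 + (j - 1) := by omega
      exact hNo i2 (by omega) (by omega) (by rw [← hjj2, ← heq]; exact c1.2)
    · rw [← heq]; exact c1.2
  · rw [if_neg c1, if_neg]
    intro c2
    apply c1
    constructor
    · omega
    · rw [heq]; exact c2.2

include hNo hj1 in
lemma shift_le
    (hgap : ∀ i jj, 0 < i → i ≤ jj → jj ≤ n → entry n lam x i jj ≠ v0 →
      2 * |s| ≤ |entry n lam x i jj - v0|)
    {i1 jj1 i2 jj2 : ℕ} (h01 : 0 < i1) (h11 : i1 ≤ jj1) (hn1 : jj1 ≤ n)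
    (h02 : 0 < i2) (h12 : i2 ≤ jj2) (hn2 : jj2 ≤ n)
    (hd : jj1 - i1 = (jj2 - i2) + 1 ∨ jj2 - i2 = (jj1 - i1) + 1)
    (hle : entry n lam x i1 jj1 ≤ entry n lam x i2 jj2) :
    entry n lam x i1 jj1 + s * Wfun n lam x j v0 i1 jj1
      ≤ entry n lam x i2 jj2 + s * Wfun n lam x j v0 i2 jj2 := by
  by_cases hW : Wfun n lam x j v0 i1 jj1 = Wfun n lam x j v0 i2 jj2
  · rw [hW]; linarith
  · have hne : entry n lam x i1 jj1 ≠ entry n lam x i2 jj2 := by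
      intro heq
      rcases hd with hd | hd
      · exact hW (W_eq_of_entry_eq hNo hj1 h01 h11 hn1 h02 h12 hn2 hd heq)
      · exact hW (W_eq_of_entry_eq hNo hj1 h02 h12 hn2 h01 h11 hn1 hd heq.symm).symm
    have hlt : entry n lam x i1 jj1 < entry n lam x i2 jj2 := lt_of_le_of_ne hle hne
    have hs1 : s ≤ |s| := le_abs_self s
    have hs2 : -s ≤ |s| := neg_le_abs s
    rcases Wfun_cases (x := x) (j := j) (v0 := v0) (lam := lam) i1 jj1 with hW1 | hW1 <;>
      rcases Wfun_cases (x := x) (j := j) (v0 := v0) (lam := lam) i2 jj2 with hW2 | hW2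
    · exact absurd (hW1.trans hW2.symm) hW
    · -- W1 = 0, W2 = 1, entry2 = v0, entry1 < v0
      have hne1 : entry n lam x i1 jj1 ≠ v0 := by rw [← hW2.2]; exact hne
      have hg := hgap i1 jj1 h01 h11 hn1 hne1
      rw [hW2.2] at hlt
      have h0 : entry n lam x i1 jj1 - v0 < 0 := by linarith
      have hg' : 2 * |s| ≤ v0 - entry n lam x i1 jj1 := by
        calc 2 * |s| ≤ |entry n lam x i1 jj1 - v0| := hg
        _ = v0 - entry n lam x i1 jj1 := by rw [abs_of_neg h0]; ring
      have habs : (0:ℝ) ≤ |s| := abs_nonneg s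
      rw [hW1, hW2.1, hW2.2]
      linarith
    · -- W1 = 1, W2 = 0, entry1 = v0, v0 < entry2
      have hne2 : entry n lam x i2 jj2 ≠ v0 := by rw [← hW1.2]; exact hne.symm
      have hg := hgap i2 jj2 h02 h12 hn2 hne2
      rw [hW1.2] at hlt
      have h0 : (0:ℝ) < entry n lam x i2 jj2 - v0 := by linarith
      have hg' : 2 * |s| ≤ entry n lam x i2 jj2 - v0 := by
        calc 2 * |s| ≤ |entry n lam x i2 jj2 - v0| := hg
        _ = entry n lam x i2 jj2 - v0 := abs_of_pos h0
      have habs : (0:ℝ) ≤ |s| := abs_nonneg s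
      rw [hW2, hW1.1, hW1.2]
      linarith
    · rw [hW1.1, hW2.1]; linarith

include hNo hj1 in
lemma shift_eq
    {i1 jj1 i2 jj2 : ℕ} (h01 : 0 < i1) (h11 : i1 ≤ jj1) (hn1 : jj1 ≤ n)
    (h02 : 0 < i2) (h12 : i2 ≤ jj2) (hn2 : jj2 ≤ n)
    (hd : jj1 - i1 = (jj2 - i2) + 1)
    (heq : entry n lam x i1 jj1 = entry n lam x i2 jj2) :
    entry n lam x i1 jj1 + s * Wfun n lam x j v0 i1 jj1
      = entry n lam x i2 jj2 + s * Wfun n lam x j v0 i2 jj2 := by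
  rw [heq, W_eq_of_entry_eq hNo hj1 h01 h11 hn1 h02 h12 hn2 hd heq]

end B

section C
variable {n : ℕ} {lam : ℕ → ℝ} {x : GZpos n → ℝ} {j : ℕ} {v0 : ℝ} {s : ℝ} {r : ℕ → ℕ}

set_option linter.unusedSectionVars false

variable (hNo : ∀ i, 1 ≤ i → i + (j - 1) ≤ n → entry n lam x i (i + (j - 1)) ≠ v0)
  (hj1 : 1 ≤ j)
  (hgap : ∀ i jj, 0 < i → i ≤ jj → jj ≤ n → entry n lam x i jj ≠ v0 →
      2 * |s| ≤ |entry n lam x i jj - v0|)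

include hNo hj1 hgap in
lemma xshift_mem_Fface (hr : r ∈ calF n) (hxF : x ∈ Fface n lam r) :
    xshift n lam x j v0 s ∈ Fface n lam r := by
  obtain ⟨hxGZ, hxE⟩ := hxF
  constructor
  · -- GZ membership
    intro i jj h0 hij hjn
    have h1 := hxGZ i jj h0 hij hjn
    constructor
    · rw [entry_xshift hj1 h0 (by omega) (by omega),
         entry_xshift hj1 h0 (by omega) (by omega)]
      exact shift_le hNo hj1 hgap h0 (by omega) (by omega) h0 hij (by omega)
        (Or.inl (by omega)) h1.1
    · rw [entry_xshift hj1 (by omega) (by omega) (by omega),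
         entry_xshift hj1 h0 (by omega) (by omega)]
      exact shift_le hNo hj1 hgap (by omega) (by omega) (by omega) h0 (by omega) (by omega)
        (Or.inr (by omega)) h1.2
  · -- face equalities
    intro j' hj'1 hj'n
    have hrj' := hr.1 j' hj'1 hj'n
    constructor
    · intro i hi1 hir
      have heq := (hxE j' hj'1 hj'n).1 i hi1 hir
      have hc1 : j' + i ≤ n := by omega
      rw [entry_xshift hj1 (by omega) (by omega) (by omega),
         entry_xshift hj1 (by omega) (by omega) (by omega)]
      exact shift_eq hNo hj1 (by omega) (by omega) (by omega) (by omega) (by omega)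
        (by omega) (by omega) heq
    · intro i hri hin
      have heq := (hxE j' hj'1 hj'n).2 i hri hin
      have hc1 : j' + i ≤ n := by omega
      rw [entry_xshift hj1 (by omega) (by omega) (by omega),
         entry_xshift hj1 (by omega) (by omega) (by omega)]
      exact shift_eq hNo hj1 (by omega) (by omega) (by omega) (by omega) (by omega)
        (by omega) (by omega) heq

end C

section D
variable {n : ℕ} {lam : ℕ → ℝ} {x : GZpos n → ℝ} {j : ℕ} {v0 : ℝ} {s : ℝ} {r : ℕ → ℕ}

set_option linter.unusedSectionVars false

lemma Wfun_nonneg (i jj : ℕ) : 0 ≤ Wfun n lam x j v0 i jj := by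
  rcases Wfun_cases (n := n) (lam := lam) (x := x) (j := j) (v0 := v0) i jj with h | h
  · rw [h]
  · rw [h.1]; norm_num

lemma yco_xshift (hj1 : 1 ≤ j) {k : ℕ} (hk : k ≤ n) :
    yco n lam (xshift n lam x j v0 s) k
      = yco n lam x k + s * ∑ i ∈ Finset.Icc 1 (n - k), Wfun n lam x j v0 i (i + k) := by
  unfold yco
  rw [Finset.mul_sum, ← Finset.sum_add_distrib]
  apply Finset.sum_congr rfl
  intro i hi
  rw [Finset.mem_Icc] at hi
  exact entry_xshift hj1 (by omega) (by omega) (by omega)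

lemma Cw_jm1 (hj1 : 1 ≤ j) :
    ∑ i ∈ Finset.Icc 1 (n - (j - 1)), Wfun n lam x j v0 i (i + (j - 1)) = 0 := by
  apply Finset.sum_eq_zero
  intro i _
  unfold Wfun
  rw [if_neg]
  intro hc
  omega

lemma Cw_j_pos (hj1 : 1 ≤ j) {R : ℕ} (hR1 : 1 ≤ R) (hR2 : R ≤ n - j)
    (hv0 : entry n lam x R (R + j) = v0) :
    (1:ℝ) ≤ ∑ i ∈ Finset.Icc 1 (n - j), Wfun n lam x j v0 i (i + j) := by
  have h1 : Wfun n lam x j v0 R (R + j) = 1 := by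
    unfold Wfun
    rw [if_pos]
    exact ⟨by omega, hv0⟩
  calc (1:ℝ) = Wfun n lam x j v0 R (R + j) := h1.symm
  _ ≤ ∑ i ∈ Finset.Icc 1 (n - j), Wfun n lam x j v0 i (i + j) := by
      apply Finset.single_le_sum (f := fun i => Wfun n lam x j v0 i (i + j))
      · intro i _; exact Wfun_nonneg i (i + j)
      · rw [Finset.mem_Icc]; omega

end D

section E
variable {n : ℕ} {lam : ℕ → ℝ} {x : GZpos n → ℝ} {j : ℕ} {r : ℕ → ℕ}

set_option linter.unusedSectionVars false

lemma entry_mem_V {i jj : ℕ} (h0 : 0 < i) (hij : i ≤ jj) (hjn : jj ≤ n) :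
    entry n lam x i jj
      ∈ Finset.image x Finset.univ ∪ Finset.image lam (Finset.Icc 1 n) := by
  by_cases h : i < jj
  · have hcond : 0 < i ∧ i < jj ∧ jj ≤ n := ⟨h0, h, hjn⟩
    rw [entry, dif_pos hcond]
    apply Finset.mem_union_left
    exact Finset.mem_image_of_mem x (Finset.mem_univ _)
  · have : i = jj := by omega
    rw [entry_invalid _ (by omega)]
    apply Finset.mem_union_right
    apply Finset.mem_image_of_mem
    rw [Finset.mem_Icc]
    omega

lemma dichotomy (hn : 2 ≤ n) (hr : r ∈ calF n) (hxF : x ∈ Fface n lam r)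
    (hext : Phi n lam x ∈ Set.extremePoints ℝ (Phi n lam '' Fface n lam r))
    (hj1 : 1 ≤ j) (hjn : j ≤ n - 1) :
    entry n lam x (r j) (r j + j) = entry n lam x (r j) (r j + j - 1) ∨
    entry n lam x (r j) (r j + j) = entry n lam x (r j + 1) (r j + j) := by
  by_contra hcon
  push_neg at hcon
  obtain ⟨h1, h2⟩ := hcon
  set R := r j with hRdef
  set v0 : ℝ := entry n lam x R (R + j) with hv0def
  obtain ⟨hR1, hR2⟩ := hr.1 j hj1 hjn
  have hxGZ : x ∈ GZ n lam := hxF.1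
  -- bounds
  have hGZ1 := hxGZ R (R + j - 1) (by omega) (by omega) (by omega)
  have e1 : R + j - 1 + 1 = R + j := by omega
  rw [e1] at hGZ1
  have hb : v0 < entry n lam x R (R + j - 1) := lt_of_le_of_ne hGZ1.1 h1
  have ha : entry n lam x (R + 1) (R + j) < v0 := lt_of_le_of_ne hGZ1.2 (Ne.symm h2)
  -- no v0 on diagonal j - 1
  have hNo : ∀ i, 1 ≤ i → i + (j - 1) ≤ n → entry n lam x i (i + (j - 1)) ≠ v0 := by
    intro i hi1 hin
    by_cases hiR : i ≤ R
    · have hmono := diag_mono hxGZ (j - 1) (by omega : 0 < i) hiR (by omega)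
      have e2 : R + (j - 1) = R + j - 1 := by omega
      rw [e2] at hmono
      intro hv
      rw [hv] at hmono
      linarith
    · have hmono := diag_mono hxGZ (j - 1) (by omega : 0 < R + 1) (by omega : R + 1 ≤ i)
        (by omega)
      have e2 : R + 1 + (j - 1) = R + j := by omega
      rw [e2] at hmono
      intro hv
      rw [hv] at hmono
      linarith
  -- the finite set of values and the gap
  set V : Finset ℝ := Finset.image x Finset.univ ∪ Finset.image lam (Finset.Icc 1 n)
    with hVdef
  have hbV : entry n lam x R (R + j - 1) ∈ V.erase v0 := by
    apply Finset.mem_erase_of_ne_of_mem (by intro h; rw [h] at hb; exact lt_irrefl _ hb)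
    exact entry_mem_V (by omega) (by omega) (by omega)
  have hVne : ((V.erase v0).image (fun u => |u - v0|)).Nonempty :=
    ⟨_, Finset.mem_image_of_mem _ hbV⟩
  set δ : ℝ := ((V.erase v0).image (fun u => |u - v0|)).min' hVne with hδdef
  have hδpos : 0 < δ := by
    have hmem := ((V.erase v0).image (fun u => |u - v0|)).min'_mem hVne
    rw [Finset.mem_image] at hmem
    obtain ⟨u, hu, hdu⟩ := hmem
    rw [hδdef, ← hdu]
    have : u ≠ v0 := Finset.ne_of_mem_erase hu
    exact abs_pos.mpr (sub_ne_zero.mpr this)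
  set ε : ℝ := δ / 2 with hεdef
  have hεpos : 0 < ε := by positivity
  have hgap : ∀ (t : ℝ), |t| = ε → ∀ i jj, 0 < i → i ≤ jj → jj ≤ n →
      entry n lam x i jj ≠ v0 → 2 * |t| ≤ |entry n lam x i jj - v0| := by
    intro t ht i jj h0 hij hjn' hne
    rw [ht, hεdef]
    have hmem : |entry n lam x i jj - v0| ∈ (V.erase v0).image (fun u => |u - v0|) :=
      Finset.mem_image_of_mem _
        (Finset.mem_erase_of_ne_of_mem hne (entry_mem_V h0 hij hjn'))
    have := Finset.min'_le _ _ hmem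
    linarith
  have habsp : |ε| = ε := abs_of_pos hεpos
  have habsm : |(-ε)| = ε := by rw [abs_neg]; exact habsp
  -- the two shifted points
  have hplus : xshift n lam x j v0 ε ∈ Fface n lam r :=
    xshift_mem_Fface hNo hj1 (hgap ε habsp) hr hxF
  have hminus : xshift n lam x j v0 (-ε) ∈ Fface n lam r :=
    xshift_mem_Fface hNo hj1 (hgap (-ε) habsm) hr hxF
  -- midpoint property
  have hyco : ∀ (t : ℝ) (k : ℕ), k ≤ n → yco n lam (xshift n lam x j v0 t) k
      = yco n lam x k + t * ∑ i ∈ Finset.Icc 1 (n - k), Wfun n lam x j v0 i (i + k) :=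
    fun t k hk => yco_xshift hj1 hk
  have hmid : Phi n lam x ∈ openSegment ℝ
      (Phi n lam (xshift n lam x j v0 ε)) (Phi n lam (xshift n lam x j v0 (-ε))) := by
    refine ⟨1/2, 1/2, by norm_num, by norm_num, by norm_num, ?_⟩
    funext m
    simp only [Pi.add_apply, Pi.smul_apply, smul_eq_mul]
    by_cases hm : (m : ℕ) = n - 1
    · rw [Phi, Phi, Phi]
      simp only [hm, if_pos]
      rw [hyco ε (n-1) (by omega), hyco (-ε) (n-1) (by omega)]
      ring
    · rw [Phi, Phi, Phi]
      simp only [hm, if_neg, if_false]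
      rw [hyco ε m (by omega), hyco (-ε) m (by omega),
        hyco ε ((m : ℕ)+1) (by omega), hyco (-ε) ((m : ℕ)+1) (by omega)]
      ring
  have himg1 : Phi n lam (xshift n lam x j v0 ε) ∈ Phi n lam '' Fface n lam r :=
    Set.mem_image_of_mem _ hplus
  have himg2 : Phi n lam (xshift n lam x j v0 (-ε)) ∈ Phi n lam '' Fface n lam r :=
    Set.mem_image_of_mem _ hminus
  have heq1 := hext.2 himg1 himg2 hmid
  -- evaluate at coordinate j - 1
  have hjm1lt : j - 1 < n := by omega
  set m0 : Fin n := ⟨j - 1, hjm1lt⟩ with hm0def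
  have hm0ne : (m0 : ℕ) ≠ n - 1 := by
    simp only [hm0def]
    omega
  have hv1 : Phi n lam (xshift n lam x j v0 ε) m0 = Phi n lam x m0 - ε *
      ∑ i ∈ Finset.Icc 1 (n - j), Wfun n lam x j v0 i (i + j) := by
    rw [Phi, Phi]
    simp only [hm0ne, if_neg, if_false]
    have hj' : (m0 : ℕ) + 1 = j := by simp only [hm0def]; omega
    rw [hj']
    rw [hyco ε (j-1) (by omega), hyco ε j (by omega), Cw_jm1 hj1]
    ring
  have hCpos : (1:ℝ) ≤ ∑ i ∈ Finset.Icc 1 (n - j), Wfun n lam x j v0 i (i + j) :=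
    Cw_j_pos hj1 hR1 hR2 rfl
  have := congrFun heq1 m0
  rw [hv1] at this
  nlinarith
end E

lemma sum_skip (f : ℕ → ℝ) {N q : ℕ} (h1 : 1 ≤ q) (h2 : q ≤ N) :
    ∑ i ∈ Finset.Icc 1 N, f i
      = f q + ∑ i ∈ Finset.Icc 1 (N - 1), (if i < q then f i else f (i + 1)) := by
  rw [← Finset.add_sum_erase _ f (show q ∈ Finset.Icc 1 N by rw [Finset.mem_Icc]; omega)]
  congr 1
  apply Finset.sum_nbij' (i := fun a => if a < q then a else a - 1)
    (j := fun b => if b < q then b else b + 1)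
  · intro a ha
    rw [Finset.mem_erase, Finset.mem_Icc] at ha
    rw [Finset.mem_Icc]
    split <;> omega
  · intro b hb
    rw [Finset.mem_Icc] at hb
    rw [Finset.mem_erase, Finset.mem_Icc]
    split <;> omega
  · intro a ha
    rw [Finset.mem_erase, Finset.mem_Icc] at ha
    by_cases haq : a < q
    · rw [if_pos haq, if_pos haq]
    · rw [if_neg haq, if_neg (show ¬ (a - 1 < q) by omega)]
      omega
  · intro b hb
    rw [Finset.mem_Icc] at hb
    by_cases hbq : b < q
    · rw [if_pos hbq, if_pos hbq]
    · rw [if_neg hbq, if_neg (show ¬ (b + 1 < q) by omega)]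
      omega
  · intro a ha
    rw [Finset.mem_erase, Finset.mem_Icc] at ha
    by_cases haq : a < q
    · rw [if_pos haq, if_pos haq]
    · rw [if_neg haq, if_neg (show ¬ (a - 1 < q) by omega)]
      congr 1
      omega

section F
variable {n : ℕ} {lam : ℕ → ℝ} {x : GZpos n → ℝ} {r : ℕ → ℕ}

set_option linter.unusedSectionVars false

lemma combi (hn : 2 ≤ n) (hr : r ∈ calF n) (hxF : x ∈ Fface n lam r)
    (H : ∀ j, 1 ≤ j → j ≤ n - 1 →
      entry n lam x (r j) (r j + j) = entry n lam x (r j) (r j + j - 1) ∨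
      entry n lam x (r j) (r j + j) = entry n lam x (r j + 1) (r j + j)) :
    ∀ k, k ≤ n - 1 → ∃ g e : ℕ → ℕ,
      (∀ i, 1 ≤ i → i ≤ n - k → 1 ≤ g i ∧ g i ≤ n ∧
        entry n lam x i (i + k) = lam (g i)) ∧
      (∀ m, 1 ≤ m → m ≤ k → 1 ≤ e m ∧ e m ≤ n ∧
        yco n lam x (m - 1) - yco n lam x m = lam (e m)) ∧
      (∀ c, 1 ≤ c → c ≤ n →
        (∃ m, 1 ≤ m ∧ m ≤ k ∧ e m = c) ∨ (∃ i, 1 ≤ i ∧ i ≤ n - k ∧ g i = c)) := by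
  intro k
  induction k with
  | zero =>
      intro _
      refine ⟨fun c => c, fun c => c, ?_, ?_, ?_⟩
      · intro i hi1 hin
        simp only
        refine ⟨hi1, by omega, ?_⟩
        rw [Nat.add_zero, entry_invalid _ (by omega)]
      · intro m hm1 hm0
        exact absurd hm0 (by omega)
      · intro c hc1 hcn
        exact Or.inr ⟨c, hc1, by omega, rfl⟩
  | succ k ih =>
      intro hk1
      obtain ⟨g, e, hg, he, hcov⟩ := ih (by omega)
      have hj1 : 1 ≤ k + 1 := by omega
      have hjn : k + 1 ≤ n - 1 := hk1
      set R := r (k + 1) with hRdef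
      obtain ⟨hR1, hR2⟩ := hr.1 (k + 1) hj1 hjn
      have hE := hxF.2 (k + 1) hj1 hjn
      -- values of the new diagonal in terms of the old one
      have hup : ∀ i, 1 ≤ i → i < R →
          entry n lam x i (i + (k + 1)) = lam (g i) := by
        intro i hi1 hiR
        have h := hE.1 i hi1 hiR
        have e1 : k + 1 + i = i + (k + 1) := by omega
        rw [e1] at h
        have e2 : i + (k + 1) - 1 = i + k := by omega
        rw [e2] at h
        rw [h]
        exact (hg i hi1 (by omega)).2.2
      have hdown : ∀ i, R < i → i ≤ n - (k + 1) →
          entry n lam x i (i + (k + 1)) = lam (g (i + 1)) := by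
        intro i hiR hin
        have h := hE.2 i hiR hin
        have e1 : k + 1 + i = i + (k + 1) := by omega
        rw [e1] at h
        rw [h]
        have e3 : i + (k + 1) = (i + 1) + k := by omega
        rw [e3]
        exact (hg (i + 1) (by omega) (by omega)).2.2
      -- yco of old diagonal as a lambda-sum
      have hyk : yco n lam x k = ∑ i ∈ Finset.Icc 1 (n - k), lam (g i) := by
        unfold yco
        apply Finset.sum_congr rfl
        intro i hi
        rw [Finset.mem_Icc] at hi
        exact (hg i hi.1 hi.2).2.2
      rcases H (k + 1) hj1 hjn with hend | hend
      · -- t = top value : the index g (R+1) is removed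
        have hmid : entry n lam x R (R + (k + 1)) = lam (g R) := by
          have e2 : R + (k + 1) - 1 = R + k := by omega
          rw [← hRdef] at hend
          rw [hend, e2]
          exact (hg R hR1 (by omega)).2.2
        set g' : ℕ → ℕ := fun i => if i < R + 1 then g i else g (i + 1) with hg'def
        set e' : ℕ → ℕ := fun m => if m = k + 1 then g (R + 1) else e m with he'def
        have hg' : ∀ i, 1 ≤ i → i ≤ n - (k + 1) → 1 ≤ g' i ∧ g' i ≤ n ∧
            entry n lam x i (i + (k + 1)) = lam (g' i) := by
          intro i hi1 hin
          rw [hg'def]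
          simp only
          by_cases hiR : i < R + 1
          · rw [if_pos hiR]
            refine ⟨(hg i hi1 (by omega)).1, (hg i hi1 (by omega)).2.1, ?_⟩
            rcases Nat.lt_or_ge i R with h | h
            · exact hup i hi1 h
            · have : i = R := by omega
              rw [this]
              exact hmid
          · rw [if_neg hiR]
            exact ⟨(hg (i + 1) (by omega) (by omega)).1,
              (hg (i + 1) (by omega) (by omega)).2.1, hdown i (by omega) hin⟩
        have hyk1 : yco n lam x (k + 1) = ∑ i ∈ Finset.Icc 1 (n - (k + 1)),
            (if i < R + 1 then lam (g i) else lam (g (i + 1))) := by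
          unfold yco
          apply Finset.sum_congr rfl
          intro i hi
          rw [Finset.mem_Icc] at hi
          rw [(hg' i hi.1 hi.2).2.2, hg'def]
          simp only
          split <;> rfl
        have hsum : yco n lam x k - yco n lam x (k + 1) = lam (g (R + 1)) := by
          rw [hyk, hyk1]
          rw [sum_skip (fun i => lam (g i)) (show 1 ≤ R + 1 by omega)
            (show R + 1 ≤ n - k by omega)]
          have : n - k - 1 = n - (k + 1) := by omega
          rw [this]
          ring
        refine ⟨g', e', hg', ?_, ?_⟩
        · intro m hm1 hmk
          rw [he'def]
          simp only
          by_cases hm : m = k + 1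
          · rw [if_pos hm, hm]
            have : k + 1 - 1 = k := by omega
            rw [this]
            exact ⟨(hg (R + 1) (by omega) (by omega)).1,
              (hg (R + 1) (by omega) (by omega)).2.1, hsum⟩
          · rw [if_neg hm]
            exact he m hm1 (by omega)
        · intro c hc1 hcn
          rcases hcov c hc1 hcn with ⟨m, hm1, hmk, hmc⟩ | ⟨i, hi1, hin, hic⟩
          · refine Or.inl ⟨m, hm1, by omega, ?_⟩
            rw [he'def]
            simp only
            rw [if_neg (by omega)]
            exact hmc
          · rcases Nat.lt_or_ge i (R + 1) with h | h
            · refine Or.inr ⟨i, hi1, by omega, ?_⟩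
              rw [hg'def]
              simp only
              rw [if_pos h]
              exact hic
            · rcases Nat.eq_or_lt_of_le h with h' | h'
              · refine Or.inl ⟨k + 1, by omega, le_refl _, ?_⟩
                rw [he'def]
                simp only
                rw [if_pos trivial, h', hic]
              · refine Or.inr ⟨i - 1, by omega, by omega, ?_⟩
                rw [hg'def]
                simp only
                rw [if_neg (by omega)]
                have : i - 1 + 1 = i := by omega
                rw [this]
                exact hic
      · -- t = bottom value : the index g R is removed
        have hmid : entry n lam x R (R + (k + 1)) = lam (g (R + 1)) := by
          rw [← hRdef] at hend
          rw [hend]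
          have e3 : R + (k + 1) = (R + 1) + k := by omega
          rw [e3]
          exact (hg (R + 1) (by omega) (by omega)).2.2
        set g' : ℕ → ℕ := fun i => if i < R then g i else g (i + 1) with hg'def
        set e' : ℕ → ℕ := fun m => if m = k + 1 then g R else e m with he'def
        have hg' : ∀ i, 1 ≤ i → i ≤ n - (k + 1) → 1 ≤ g' i ∧ g' i ≤ n ∧
            entry n lam x i (i + (k + 1)) = lam (g' i) := by
          intro i hi1 hin
          rw [hg'def]
          simp only
          by_cases hiR : i < R
          · rw [if_pos hiR]
            exact ⟨(hg i hi1 (by omega)).1, (hg i hi1 (by omega)).2.1, hup i hi1 hiR⟩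
          · rw [if_neg hiR]
            refine ⟨(hg (i + 1) (by omega) (by omega)).1,
              (hg (i + 1) (by omega) (by omega)).2.1, ?_⟩
            rcases Nat.lt_or_ge R i with h | h
            · exact hdown i h hin
            · have : i = R := by omega
              rw [this]
              exact hmid
        have hyk1 : yco n lam x (k + 1) = ∑ i ∈ Finset.Icc 1 (n - (k + 1)),
            (if i < R then lam (g i) else lam (g (i + 1))) := by
          unfold yco
          apply Finset.sum_congr rfl
          intro i hi
          rw [Finset.mem_Icc] at hi
          rw [(hg' i hi.1 hi.2).2.2, hg'def]
          simp only
          split <;> rfl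
        have hsum : yco n lam x k - yco n lam x (k + 1) = lam (g R) := by
          rw [hyk, hyk1]
          rw [sum_skip (fun i => lam (g i)) (show 1 ≤ R by omega)
            (show R ≤ n - k by omega)]
          have : n - k - 1 = n - (k + 1) := by omega
          rw [this]
          ring
        refine ⟨g', e', hg', ?_, ?_⟩
        · intro m hm1 hmk
          rw [he'def]
          simp only
          by_cases hm : m = k + 1
          · rw [if_pos hm, hm]
            have : k + 1 - 1 = k := by omega
            rw [this]
            exact ⟨(hg R (by omega) (by omega)).1,
              (hg R (by omega) (by omega)).2.1, hsum⟩
          · rw [if_neg hm]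
            exact he m hm1 (by omega)
        · intro c hc1 hcn
          rcases hcov c hc1 hcn with ⟨m, hm1, hmk, hmc⟩ | ⟨i, hi1, hin, hic⟩
          · refine Or.inl ⟨m, hm1, by omega, ?_⟩
            rw [he'def]
            simp only
            rw [if_neg (by omega)]
            exact hmc
          · rcases Nat.lt_or_ge i R with h | h
            · refine Or.inr ⟨i, hi1, by omega, ?_⟩
              rw [hg'def]
              simp only
              rw [if_pos h]
              exact hic
            · rcases Nat.eq_or_lt_of_le h with h' | h'
              · refine Or.inl ⟨k + 1, by omega, le_refl _, ?_⟩
                rw [he'def]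
                simp only
                rw [if_pos trivial, h', hic]
              · refine Or.inr ⟨i - 1, by omega, by omega, ?_⟩
                rw [hg'def]
                simp only
                rw [if_neg (by omega)]
                have : i - 1 + 1 = i := by omega
                rw [this]
                exact hic

end F


/-- every extreme point of `Φ(F(r))` is a vertex of the permutohedron, i.e. of
the form `(λ_{σ(1)}, …, λ_{σ(n)})` for some permutation `σ`. -/
theorem stmt_12 (n : ℕ) (hn : 2 ≤ n) (lam : ℕ → ℝ)
    (hlam : ∀ i, 1 ≤ i → i < n → lam (i + 1) < lam i) :
    ∀ r ∈ calF n, ∀ v ∈ Set.extremePoints ℝ (Phi n lam '' Fface n lam r),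
      ∃ σ : Equiv.Perm (Fin n), v = fun i => lam ((σ i : ℕ) + 1) := by
  intro r hr v hv
  obtain ⟨x, hxF, hPhix⟩ := hv.1
  have hext : Phi n lam x ∈ Set.extremePoints ℝ (Phi n lam '' Fface n lam r) := by
    rw [hPhix]; exact hv
  have H : ∀ j, 1 ≤ j → j ≤ n - 1 →
      entry n lam x (r j) (r j + j) = entry n lam x (r j) (r j + j - 1) ∨
      entry n lam x (r j) (r j + j) = entry n lam x (r j + 1) (r j + j) :=
    fun j hj1 hjn => dichotomy hn hr hxF hext hj1 hjn
  obtain ⟨g, e, hg, he, hcov⟩ := combi hn hr hxF H (n - 1) (le_refl _)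
  have hg1 := hg 1 (le_refl 1) (by omega)
  have hyconm1 : yco n lam x (n - 1) = lam (g 1) := by
    unfold yco
    rw [show n - (n - 1) = 1 by omega, Finset.Icc_self, Finset.sum_singleton]
    exact hg1.2.2
  set E : ℕ → ℕ := fun m => if m = n then g 1 else e m with hEdef
  have hEb : ∀ m, 1 ≤ m → m ≤ n → 1 ≤ E m ∧ E m ≤ n := by
    intro m hm1 hmn
    rw [hEdef]
    simp only
    by_cases hm : m = n
    · rw [if_pos hm]; exact ⟨hg1.1, hg1.2.1⟩
    · rw [if_neg hm]
      exact ⟨(he m hm1 (by omega)).1, (he m hm1 (by omega)).2.1⟩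
  set σ' : Fin n → Fin n := fun m => ⟨E ((m : ℕ) + 1) - 1, by
    have := hEb ((m : ℕ) + 1) (by omega) (by omega)
    omega⟩ with hσ'def
  have hsurj : Function.Surjective σ' := by
    intro b
    have hc := hcov ((b : ℕ) + 1) (by omega) (by omega)
    rcases hc with ⟨m, hm1, hmk, hmc⟩ | ⟨i, hi1, hin, hic⟩
    · refine ⟨⟨m - 1, by omega⟩, ?_⟩
      rw [hσ'def]
      apply Fin.ext
      simp only
      rw [show m - 1 + 1 = m by omega, hEdef]
      simp only
      rw [if_neg (by omega), hmc]
      omega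
    · have hi : i = 1 := by omega
      refine ⟨⟨n - 1, by omega⟩, ?_⟩
      rw [hσ'def]
      apply Fin.ext
      simp only
      rw [show n - 1 + 1 = n by omega, hEdef]
      simp only
      rw [if_pos trivial, ← hi, hic]
      omega
  have hbij : Function.Bijective σ' := hsurj.bijective_of_finite
  refine ⟨Equiv.ofBijective σ' hbij, ?_⟩
  rw [← hPhix]
  funext i
  have hσi : ((Equiv.ofBijective σ' hbij) i : ℕ) + 1 = E ((i : ℕ) + 1) := by
    have h1 := hEb ((i : ℕ) + 1) (by omega) (by omega)
    have : ((Equiv.ofBijective σ' hbij) i : ℕ) = E ((i : ℕ) + 1) - 1 := rfl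
    omega
  rw [hσi]
  by_cases hi : (i : ℕ) = n - 1
  · rw [Phi]
    simp only [hi, if_pos]
    rw [hyconm1, hEdef]
    simp only
    rw [show (n : ℕ) - 1 + 1 = n by omega, if_pos rfl]
  · rw [Phi]
    simp only [hi, if_neg, if_false]
    have hle : (i : ℕ) + 1 ≤ n - 1 := by
      have := i.isLt
      omega
    have h2 := (he ((i : ℕ) + 1) (by omega) hle).2.2
    rw [show (i : ℕ) + 1 - 1 = (i : ℕ) by omega] at h2
    rw [h2, hEdef]
    simp only
    rw [if_neg (by omega)]
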